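/- Let T ~ Exp(λ) with λ > 0, let S₀ > 0, μ̃ ∈ ℝ, σ > 0, and define f(x) = ∫₀^∞ λ e^{-λ t} f_LN(x; ln S₀ + μ̃ t, σ² t) dt. Then f(x) = (λ/(S₀ √(μ̃² + 2σ²λ))) (x/S₀)^{-α-1} for x ≥ S₀ and f(x) = (λ/(S₀ √(μ̃² + 2σ²λ))) (x/S₀)^{β-1} for 0 < x < S₀, where α = (-μ̃ + √(μ̃² + 2σ²λ))/σ² and β = (μ̃ + √(μ̃² + 2σ²λ))/σ². -/

import Mathlib

open MeasureTheory Real Set Filter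

/-- Modified Bessel function of the second kind, via its integral representation. -/
noncomputable def besselK (ν z : ℝ) : ℝ :=
  2 ^ (ν - 1) * ∫ t in Set.Ioi (0:ℝ), t ^ (ν - 1) * Real.exp (-z * t - z / (4 * t))

/-- Lognormal density with parameters m (log-mean) and v (log-variance). -/
noncomputable def lognormalPdf (m v x : ℝ) : ℝ :=
  (1 / (Real.sqrt (2 * π * v) * x)) * Real.exp (-(Real.log x - m) ^ 2 / (2 * v))

lemma glasser_aux (a b : ℝ) (ha : 0 < a) (hb : 0 < b) :
    ∫ u in Ioi (0:ℝ), Real.exp (-(a*u - b/u)^2) = Real.sqrt π / (2*a) := by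
  set g : ℝ → ℝ := fun u => Real.exp (-(a*u - b/u)^2) with hg
  -- substitution φ u = a u - b/u
  have hderiv : ∀ u ∈ Ioi (0:ℝ),
      HasDerivWithinAt (fun u => a*u - b/u) (a + b/u^2) (Ioi 0) u := by
    intro u hu
    have hu0 : u ≠ 0 := (ne_of_gt hu)
    have h1 : HasDerivAt (fun u : ℝ => a*u - b/u) (a * 1 - b * (-(u^2)⁻¹)) u := by
      exact ((hasDerivAt_id u).const_mul a).sub ((hasDerivAt_inv hu0).const_mul b)
    have h2 : a * 1 - b * (-(u^2)⁻¹) = a + b/u^2 := by field_simp; ring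
    exact (h2 ▸ h1).hasDerivWithinAt
  have hmono : StrictMonoOn (fun u => a*u - b/u) (Ioi (0:ℝ)) := by
    intro u hu v hv huv
    simp only [mem_Ioi] at hu hv
    have h1 : a*u < a*v := by nlinarith
    have h2 : b/v < b/u := by
      apply div_lt_div_of_pos_left hb hu huv
    simp only []
    linarith
  have hinj : InjOn (fun u => a*u - b/u) (Ioi (0:ℝ)) := hmono.injOn
  have himg : (fun u => a*u - b/u) '' Ioi (0:ℝ) = univ := by
    apply eq_univ_of_forall
    intro w
    set s := Real.sqrt (w^2 + 4*a*b) with hs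
    have hs2 : s^2 = w^2 + 4*a*b := Real.sq_sqrt (by positivity)
    have hsw : |w| < s := by
      rw [← Real.sqrt_sq_eq_abs]
      exact Real.sqrt_lt_sqrt (by positivity) (by nlinarith)
    have hu : 0 < (w + s)/(2*a) := by
      apply div_pos _ (by positivity)
      cases' (abs_lt.mp hsw) with h1 h2
      linarith
    refine ⟨(w + s)/(2*a), hu, ?_⟩
    have hws : w + s ≠ 0 := by
      have := (abs_lt.mp hsw).1; intro h; nlinarith
    show a * ((w + s)/(2*a)) - b / ((w + s)/(2*a)) = w
    field_simp
    nlinarith [hs2]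
  have key := integral_image_eq_integral_abs_deriv_smul measurableSet_Ioi hderiv hinj
      (fun w => Real.exp (-w^2))
  rw [himg] at key
  have hgauss : ∫ w : ℝ in univ, Real.exp (-w^2) = Real.sqrt π := by
    rw [setIntegral_univ]
    have := integral_gaussian 1
    simpa using this
  rw [hgauss] at key
  -- key : √π = ∫ u in Ioi 0, |a + b/u^2| • exp(-(a*u-b/u)^2)
  have hkey2 : Real.sqrt π = ∫ u in Ioi (0:ℝ), (a + b/u^2) * g u := by
    rw [key]
    apply setIntegral_congr_fun measurableSet_Ioi
    intro u hu
    simp only [mem_Ioi] at hu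
    simp only [smul_eq_mul]
    rw [abs_of_pos (by positivity)]
  -- substitution ψ u = b/a * u⁻¹ to show ∫ (b/u^2) g = a * I
  have hderivψ : ∀ u ∈ Ioi (0:ℝ),
      HasDerivWithinAt (fun u : ℝ => b/a * u⁻¹) (-(b/a) * (u^2)⁻¹) (Ioi 0) u := by
    intro u hu
    have h1 : HasDerivAt (fun u : ℝ => b/a * u⁻¹) (b/a * (-(u^2)⁻¹)) u :=
      (hasDerivAt_inv (ne_of_gt hu)).const_mul (b/a)
    have h2 : b/a * (-(u^2)⁻¹) = -(b/a) * (u^2)⁻¹ := by ring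
    exact (h2 ▸ h1).hasDerivWithinAt
  have hinjψ : InjOn (fun u : ℝ => b/a * u⁻¹) (Ioi (0:ℝ)) := by
    intro u hu v hv h
    have hba : b/a ≠ 0 := by positivity
    have := mul_left_cancel₀ hba h
    exact inv_injective this
  have himgψ : (fun u : ℝ => b/a * u⁻¹) '' Ioi (0:ℝ) = Ioi 0 := by
    ext w
    simp only [mem_image, mem_Ioi]
    constructor
    · rintro ⟨u, hu, rfl⟩; positivity
    · intro hw
      refine ⟨b/(a*w), by positivity, ?_⟩
      field_simp
  have keyψ := integral_image_eq_integral_abs_deriv_smul measurableSet_Ioi hderivψ hinjψ g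
  rw [himgψ] at keyψ
  have hkeyψ : ∫ u in Ioi (0:ℝ), g u = ∫ u in Ioi (0:ℝ), (1/a) * ((b/u^2) * g u) := by
    rw [keyψ]
    apply setIntegral_congr_fun measurableSet_Ioi
    intro u hu
    simp only [mem_Ioi] at hu
    simp only [smul_eq_mul]
    have hba : (0:ℝ) < b/a := by positivity
    have habs : |(-(b/a) * (u^2)⁻¹)| = (b/a) * (u^2)⁻¹ := by
      rw [abs_of_neg (by simp only [neg_mul]; exact neg_neg_of_pos (by positivity))]
      ring
    rw [habs]
    have harg : a * (b/a * u⁻¹) - b / (b/a * u⁻¹) = -(a*u - b/u) := by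
      field_simp
      ring
    rw [hg]
    simp only []
    rw [harg, neg_sq]
    field_simp
  -- integrability
  have hInt1 : IntegrableOn (fun u => (a + b/u^2) * g u) (Ioi (0:ℝ)) := by
    have h0 : IntegrableOn (fun w => Real.exp (-w^2)) ((fun u => a*u - b/u) '' Ioi (0:ℝ)) := by
      rw [himg]
      rw [integrableOn_univ]
      have := integrable_exp_neg_mul_sq (b := 1) one_pos
      simpa using this
    have h1 := (integrableOn_image_iff_integrableOn_abs_deriv_smul measurableSet_Ioi
      hderiv hinj (fun w => Real.exp (-w^2))).mp h0
    apply h1.congr_fun _ measurableSet_Ioi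
    intro u hu
    simp only [mem_Ioi] at hu
    simp only [smul_eq_mul]
    rw [abs_of_pos (by positivity)]
  have hgmeas : AEStronglyMeasurable g (volume.restrict (Ioi (0:ℝ))) := by
    apply Measurable.aestronglyMeasurable
    apply Real.measurable_exp.comp
    apply Measurable.neg
    apply Measurable.pow_const
    exact (measurable_id.const_mul a).sub (measurable_inv.const_mul b)
  have hg_int : IntegrableOn g (Ioi (0:ℝ)) := by
    apply Integrable.mono (hInt1.const_mul (1/a)) hgmeas
    filter_upwards [ae_restrict_mem measurableSet_Ioi] with u hu
    simp only [mem_Ioi] at hu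
    have hgpos : 0 < g u := Real.exp_pos _
    rw [Real.norm_eq_abs, Real.norm_eq_abs, abs_of_pos hgpos,
      abs_of_pos (by positivity : (0:ℝ) < (1/a) * ((a + b/u^2) * g u))]
    have hrw : (1/a) * ((a + b/u^2) * g u) = g u + (b/(a*u^2)) * g u := by
      field_simp
    rw [hrw]
    exact le_add_of_nonneg_right (by positivity)
  have hbg_int : IntegrableOn (fun u => (b/u^2) * g u) (Ioi (0:ℝ)) := by
    apply IntegrableOn.congr_fun (hInt1.sub (hg_int.const_mul a)) ?_ measurableSet_Ioi
    intro u hu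
    simp only [Pi.sub_apply]
    ring
  have e2 : ∫ u in Ioi (0:ℝ), (b/u^2) * g u = a * ∫ u in Ioi (0:ℝ), g u := by
    rw [hkeyψ, integral_const_mul]
    field_simp
  have e1 : Real.sqrt π = 2 * a * ∫ u in Ioi (0:ℝ), g u := by
    rw [hkey2]
    have : ∫ u in Ioi (0:ℝ), (a + b/u^2) * g u
        = (∫ u in Ioi (0:ℝ), a * g u) + ∫ u in Ioi (0:ℝ), (b/u^2) * g u := by
      rw [← integral_add (hg_int.const_mul a) hbg_int]
      apply setIntegral_congr_fun measurableSet_Ioi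
      intro u hu
      simp only []
      ring
    rw [this, integral_const_mul, e2]
    ring
  rw [eq_div_iff (by positivity : (2*a : ℝ) ≠ 0)]
  linarith [e1]

lemma glasser' (a b : ℝ) (ha : 0 < a) (hb : 0 ≤ b) :
    ∫ u in Ioi (0:ℝ), Real.exp (-(a*u - b/u)^2) = Real.sqrt π / (2*a) := by
  rcases eq_or_lt_of_le hb with hb0 | hb
  · have : ∀ u ∈ Ioi (0:ℝ), Real.exp (-(a*u - b/u)^2) = Real.exp (-(a^2) * u^2) := by
      intro u hu; rw [← hb0]; congr 1; ring
    rw [setIntegral_congr_fun measurableSet_Ioi this, integral_gaussian_Ioi,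
      Real.sqrt_div pi_pos.le, Real.sqrt_sq ha.le]
    ring
  · exact glasser_aux a b ha hb

lemma laplaceK (p q : ℝ) (hp : 0 < p) (hq : 0 ≤ q) :
    ∫ t in Ioi (0:ℝ), (Real.sqrt t)⁻¹ * Real.exp (-p*t - q/t)
      = Real.sqrt (π/p) * Real.exp (-2 * Real.sqrt (p*q)) := by
  have hderiv : ∀ u ∈ Ioi (0:ℝ),
      HasDerivWithinAt (fun u : ℝ => u^2) (2*u) (Ioi 0) u := by
    intro u hu
    have h1 : HasDerivAt (fun u : ℝ => u^2) (↑2 * u^(2-1)) u := hasDerivAt_pow 2 u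
    simpa using h1.hasDerivWithinAt
  have hinj : InjOn (fun u : ℝ => u^2) (Ioi (0:ℝ)) := by
    intro u hu v hv h
    simp only [mem_Ioi] at hu hv
    have h' : u^2 = v^2 := h
    have : Real.sqrt (u^2) = Real.sqrt (v^2) := by rw [h']
    rwa [Real.sqrt_sq hu.le, Real.sqrt_sq hv.le] at this
  have himg : (fun u : ℝ => u^2) '' Ioi (0:ℝ) = Ioi 0 := by
    ext w
    simp only [mem_image, mem_Ioi]
    constructor
    · rintro ⟨u, hu, rfl⟩; positivity
    · intro hw
      exact ⟨Real.sqrt w, Real.sqrt_pos.2 hw, Real.sq_sqrt hw.le⟩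
  have key := integral_image_eq_integral_abs_deriv_smul measurableSet_Ioi hderiv hinj
      (fun t => (Real.sqrt t)⁻¹ * Real.exp (-p*t - q/t))
  rw [himg] at key
  rw [key]
  have sp := Real.sq_sqrt hp.le
  have sq' := Real.sq_sqrt hq
  have spq : Real.sqrt p * Real.sqrt q = Real.sqrt (p*q) := (Real.sqrt_mul hp.le q).symm
  have step : ∀ u ∈ Ioi (0:ℝ),
      |2*u| • ((Real.sqrt (u^2))⁻¹ * Real.exp (-p*u^2 - q/u^2))
        = 2 * (Real.exp (-2 * Real.sqrt (p*q)) *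
            Real.exp (-(Real.sqrt p * u - Real.sqrt q / u)^2)) := by
    intro u hu
    simp only [mem_Ioi] at hu
    rw [smul_eq_mul, abs_of_pos (by positivity), Real.sqrt_sq hu.le]
    rw [← Real.exp_add]
    have hexp : -p*u^2 - q/u^2 = -2 * Real.sqrt (p*q) + -(Real.sqrt p * u - Real.sqrt q / u)^2 := by
      field_simp
      linear_combination (u^2*u^2) * sp + sq' + (-2*u^2) * spq
    rw [hexp]
    field_simp
  rw [setIntegral_congr_fun measurableSet_Ioi step, integral_const_mul, integral_const_mul,
    glasser' (Real.sqrt p) (Real.sqrt q) (Real.sqrt_pos.2 hp) (Real.sqrt_nonneg q),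
    Real.sqrt_div pi_pos.le]
  field_simp

theorem stmt9 (lam S₀ μt σ : ℝ) (hlam : 0 < lam) (hS : 0 < S₀) (hσ : 0 < σ)
    (x : ℝ) (hx : 0 < x) :
    (∫ t in Set.Ioi (0:ℝ), lam * Real.exp (-lam * t) *
        lognormalPdf (Real.log S₀ + μt * t) (σ ^ 2 * t) x) =
      if S₀ ≤ x then
        lam / (S₀ * Real.sqrt (μt ^ 2 + 2 * σ ^ 2 * lam)) *
          (x / S₀) ^ (-((-μt + Real.sqrt (μt ^ 2 + 2 * σ ^ 2 * lam)) / σ ^ 2) - 1)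
      else
        lam / (S₀ * Real.sqrt (μt ^ 2 + 2 * σ ^ 2 * lam)) *
          (x / S₀) ^ ((μt + Real.sqrt (μt ^ 2 + 2 * σ ^ 2 * lam)) / σ ^ 2 - 1) := by
  have hσ2 : (0:ℝ) < σ ^ 2 := by positivity
  generalize hgen : σ ^ 2 = v at hσ2 ⊢
  clear hgen hσ σ
  have hv0 : v ≠ 0 := hσ2.ne'
  have hx0 : x ≠ 0 := hx.ne'
  have hS0 : S₀ ≠ 0 := hS.ne'
  set y : ℝ := Real.log x - Real.log S₀ with hy
  set p : ℝ := lam + μt^2/(2*v) with hp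
  set q : ℝ := y^2/(2*v) with hq
  have hp0 : 0 < p := by positivity
  have hq0 : 0 ≤ q := by positivity
  set s : ℝ := Real.sqrt (2*π*v) with hs
  have hs0 : 0 < s := Real.sqrt_pos.2 (by positivity)
  set D : ℝ := μt^2 + 2*v*lam with hD
  have hD0 : 0 < D := by positivity
  set sD : ℝ := Real.sqrt D with hsD
  have hsD0 : 0 < sD := Real.sqrt_pos.2 hD0
  have hs0' : s ≠ 0 := hs0.ne'
  have hsD0' : sD ≠ 0 := hsD0.ne'
  set C : ℝ := lam * Real.exp (y*μt/v) / (x*s) with hC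
  -- step 1: pointwise rewrite
  have step1 : ∀ t ∈ Ioi (0:ℝ), lam * Real.exp (-lam * t) *
      lognormalPdf (Real.log S₀ + μt * t) (v * t) x
      = C * ((Real.sqrt t)⁻¹ * Real.exp (-p*t - q/t)) := by
    intro t ht
    simp only [mem_Ioi] at ht
    unfold lognormalPdf
    have ht0 : t ≠ 0 := ht.ne'
    have hsqrt : Real.sqrt (2*π*(v*t)) = s * Real.sqrt t := by
      rw [show 2*π*(v*t) = (2*π*v)*t by ring, Real.sqrt_mul (by positivity)]
    have hexp : Real.exp (-lam*t) * Real.exp (-(Real.log x - (Real.log S₀ + μt*t))^2/(2*(v*t)))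
        = Real.exp (y*μt/v) * Real.exp (-p*t - q/t) := by
      rw [← Real.exp_add, ← Real.exp_add]
      congr 1
      simp only [hy, hp, hq]
      field_simp
      ring
    rw [hsqrt, hC]
    have hst : (0:ℝ) < Real.sqrt t := Real.sqrt_pos.2 ht
    linear_combination (lam / (s * Real.sqrt t * x)) * hexp
  rw [setIntegral_congr_fun measurableSet_Ioi step1, integral_const_mul,
    laplaceK p q hp0 hq0]
  -- step 2: simplify laplace constants
  have hpi : Real.sqrt (π/p) = s / sD := by
    rw [show π/p = (2*π*v)/D by rw [hp, hD]; field_simp; ring, Real.sqrt_div (by positivity)]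
  have hpq : Real.sqrt (p*q) = sD * |y| / (2*v) := by
    have h2 : sD^2 = D := Real.sq_sqrt hD0.le
    have h3 : |y|^2 = y^2 := sq_abs y
    have h1 : p*q = (sD * |y| / (2*v))^2 := by
      have e : (sD * |y| / (2*v))^2 = D * y^2/(4*v^2) := by
        rw [div_pow, mul_pow, h2, h3]
        ring
      rw [e, hp, hq, hD]
      field_simp
      ring
    rw [h1, Real.sqrt_sq (by positivity)]
  rw [hpi, hpq]
  -- useful exp facts
  have hxS0 : (0:ℝ) < x / S₀ := div_pos hx hS
  have hexpy : Real.exp (-y) = S₀ / x := by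
    rw [hy, neg_sub, ← Real.log_div hS0 hx0, Real.exp_log (div_pos hS hx)]
  by_cases hc : S₀ ≤ x
  · rw [if_pos hc]
    have hy0 : 0 ≤ y := by
      rw [hy, sub_nonneg]
      exact Real.log_le_log hS hc
    rw [abs_of_nonneg hy0, Real.rpow_def_of_pos hxS0, Real.log_div hx0 hS0, ← hy]
    have hsplit : Real.exp (y * (-((-μt + sD) / v) - 1))
        = Real.exp (y*μt/v) * Real.exp (-2 * (sD*y/(2*v))) * Real.exp (-y) := by
      rw [← Real.exp_add, ← Real.exp_add]
      congr 1
      field_simp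
      ring
    rw [hsplit, hexpy, hC]
    have key : ∀ E1 E2 : ℝ, lam * E1 / (x*s) * (s/sD * E2) = lam/(S₀*sD) * (E1*E2*(S₀/x)) := by
      intro E1 E2
      field_simp
    exact key _ _
  · rw [if_neg hc]
    push_neg at hc
    have hy0 : y ≤ 0 := by
      rw [hy, sub_nonpos]
      exact Real.log_le_log hx hc.le
    rw [abs_of_nonpos hy0, Real.rpow_def_of_pos hxS0, Real.log_div hx0 hS0, ← hy]
    have hsplit : Real.exp (y * ((μt + sD) / v - 1))
        = Real.exp (y*μt/v) * Real.exp (-2 * (sD * -y/(2*v))) * Real.exp (-y) := by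
      rw [← Real.exp_add, ← Real.exp_add]
      congr 1
      field_simp
      ring
    rw [hsplit, hexpy, hC]
    have key : ∀ E1 E2 : ℝ, lam * E1 / (x*s) * (s/sD * E2) = lam/(S₀*sD) * (E1*E2*(S₀/x)) := by
      intro E1 E2
      field_simp
    exact key _ _
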